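/- Let X be a simplicial group, n ≥ 2, and let A be a proper subset of {0,1,…,n-1}. Then d^n_n(⋂_{i∈A} Ker d^n_i) = ⋂_{i∈A} Ker d^{n-1}_i, where for A = ∅ this asserts that d^n_n : X_n → X_{n-1} is surjective. -/

import Mathlib

open CategoryTheory Simplicial

section Helpers

variable (X : SimplicialObject GrpCat) {m : ℕ}

private lemma SGrp.congr_app {G H : GrpCat} {f g : G ⟶ H} (h : f = g) (x : G) : f x = g x := by
  rw [h]

/-- `d_b (d_last w) = d_last (d_{castSucc b} w)` on `X_{m+2}`. -/
private lemma SGrp.L1 (b : Fin (m + 2)) (w : X _⦋m + 2⦌) :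
    X.δ b (X.δ (Fin.last (m + 2)) w) = X.δ (Fin.last (m + 1)) (X.δ (Fin.castSucc b) w) := by
  have h := X.δ_comp_δ (n := m) (i := b) (j := Fin.last (m + 1)) (Fin.le_last b)
  rw [Fin.succ_last] at h
  exact SGrp.congr_app h w

/-- `d_a (d_{castSucc b} w) = d_{b-1} (d_{castSucc a} w)` for `a < b`. -/
private lemma SGrp.L2 (a b : Fin (m + 2)) (hab : (a : ℕ) < b) (w : X _⦋m + 2⦌) :
    X.δ a (X.δ (Fin.castSucc b) w) =
      X.δ (⟨(b : ℕ) - 1, Nat.lt_of_le_of_lt (Nat.sub_le _ _) b.isLt⟩ : Fin (m + 2))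
        (X.δ (Fin.castSucc a) w) := by
  have h := X.δ_comp_δ (n := m) (i := a)
    (j := ⟨(b : ℕ) - 1, Nat.lt_of_le_of_lt (Nat.sub_le _ _) b.isLt⟩)
    (by simp only [Fin.le_def]; omega)
  rw [show (⟨(b : ℕ) - 1, Nat.lt_of_le_of_lt (Nat.sub_le _ _) b.isLt⟩ : Fin (m + 2)).succ
      = Fin.castSucc b from by ext; simp; omega] at h
  exact SGrp.congr_app h w

/-- `d_a (s_s z) = z` when `a = s + 1`. -/
private lemma SGrp.L3 (s : Fin (m + 2)) (a : Fin (m + 3)) (h : (a : ℕ) = (s : ℕ) + 1)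
    (z : X _⦋m + 1⦌) : X.δ a (X.σ s z) = z := by
  have h' := X.δ_comp_σ_succ' (n := m + 1) (j := a) (i := s) (by ext; simp [h])
  exact SGrp.congr_app h' z

/-- `d_{castSucc a} (s_s z) = s_{s-1} (d_a z)` for `a < s`. -/
private lemma SGrp.L5 (a s : Fin (m + 2)) (h : (a : ℕ) < s) (z : X _⦋m + 1⦌) :
    X.δ (Fin.castSucc a) (X.σ s z) =
      X.σ (⟨(s : ℕ) - 1, by have := s.isLt; omega⟩ : Fin (m + 1)) (X.δ a z) := by
  have h' := X.δ_comp_σ_of_le (n := m) (i := a)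
    (j := ⟨(s : ℕ) - 1, by have := s.isLt; omega⟩)
    (by simp only [Fin.le_def]; simp; omega)
  rw [show (⟨(s : ℕ) - 1, by have := s.isLt; omega⟩ : Fin (m + 1)).succ = s from
      by ext; simp; omega] at h'
  exact SGrp.congr_app h' z

/-- `d_a (s_s z) = s_s (d_{a-1} z)` for `a > s + 1`. -/
private lemma SGrp.L6 (a : Fin (m + 3)) (s : Fin (m + 2)) (h : (s : ℕ) + 1 < a)
    (z : X _⦋m + 1⦌) :
    X.δ a (X.σ s z) =
      X.σ (⟨(s : ℕ), by have := a.isLt; omega⟩ : Fin (m + 1))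
        (X.δ (⟨(a : ℕ) - 1, by have := a.isLt; omega⟩ : Fin (m + 2)) z) := by
  have h' := X.δ_comp_σ_of_gt (n := m)
    (i := ⟨(a : ℕ) - 1, by have := a.isLt; omega⟩)
    (j := ⟨(s : ℕ), by have := a.isLt; omega⟩)
    (by simp only [Fin.lt_def]; simp; omega)
  rw [show Fin.castSucc (⟨(s : ℕ), by have := a.isLt; omega⟩ : Fin (m + 1)) = s from by ext; simp,
      show (⟨(a : ℕ) - 1, by have := a.isLt; omega⟩ : Fin (m + 2)).succ = a from
        by ext; simp; omega] at h'
  exact SGrp.congr_app h' z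

/-- The filling algorithm: cascade of corrections from index `k + j` down to the hole `k`. -/
private lemma SGrp.fill (A : Finset (Fin (m + 2))) (k : Fin (m + 2)) (hk : k ∉ A)
    (y : X _⦋m + 1⦌) (hy : ∀ i ∈ A, X.δ i y = 1) :
    ∀ j : ℕ, (k : ℕ) + j ≤ m + 1 → ∀ w : X _⦋m + 2⦌,
      X.δ (Fin.last (m + 2)) w = y →
      (∀ i ∈ A, (i : ℕ) ≠ (k : ℕ) + j → X.δ (Fin.castSucc i) w = 1) →
      ∃ x : X _⦋m + 2⦌, X.δ (Fin.last (m + 2)) x = y ∧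
        ∀ i ∈ A, X.δ (Fin.castSucc i) x = 1 := by
  intro j
  induction j with
  | zero =>
    intro _ w hw hclean
    refine ⟨w, hw, fun i hi => hclean i hi fun h => hk ?_⟩
    have : i = k := Fin.ext (by simpa using h)
    rwa [this] at hi
  | succ j ih =>
    intro hj w hw hclean
    by_cases hrA : (⟨(k : ℕ) + j + 1, by omega⟩ : Fin (m + 2)) ∈ A
    · refine ih (by omega)
        (w * (X.σ (⟨(k : ℕ) + j, by omega⟩ : Fin (m + 2))
          (X.δ (Fin.castSucc (⟨(k : ℕ) + j + 1, by omega⟩ : Fin (m + 2))) w))⁻¹) ?_ ?_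
      · -- last face is still `y`
        have e1 : X.δ (Fin.last (m + 2)) (X.σ (⟨(k : ℕ) + j, by omega⟩ : Fin (m + 2))
            (X.δ (Fin.castSucc (⟨(k : ℕ) + j + 1, by omega⟩ : Fin (m + 2))) w)) = 1 := by
          rw [SGrp.L6 X (Fin.last (m + 2)) ⟨(k : ℕ) + j, by omega⟩ (by simp; omega)]
          have h2 : (⟨((Fin.last (m + 2) : ℕ)) - 1,
              by have := (Fin.last (m + 2)).isLt; omega⟩ : Fin (m + 2)) = Fin.last (m + 1) := by
            ext; simp
          rw [h2, ← SGrp.L1 X ⟨(k : ℕ) + j + 1, by omega⟩ w, hw, hy _ hrA, map_one]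
        rw [map_mul, map_inv, hw, e1, inv_one, mul_one]
      · -- the remaining prescribed faces
        intro i hi hij
        rcases lt_trichotomy ((i : ℕ)) ((k : ℕ) + j + 1) with h | h | h
        · have hcw : X.δ (Fin.castSucc i) w = 1 := hclean i hi (by omega)
          have e : X.δ (Fin.castSucc i) (X.σ (⟨(k : ℕ) + j, by omega⟩ : Fin (m + 2))
              (X.δ (Fin.castSucc (⟨(k : ℕ) + j + 1, by omega⟩ : Fin (m + 2))) w)) = 1 := by
            rw [SGrp.L5 X i ⟨(k : ℕ) + j, by omega⟩ (by simp; omega)]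
            rw [SGrp.L2 X i ⟨(k : ℕ) + j + 1, by omega⟩ (by simp; omega) w, hcw, map_one,
              map_one]
          rw [map_mul, map_inv, hcw, e, inv_one, mul_one]
        · have hir : i = (⟨(k : ℕ) + j + 1, by omega⟩ : Fin (m + 2)) := Fin.ext (by simpa using h)
          rw [map_mul, map_inv, hir,
            SGrp.L3 X ⟨(k : ℕ) + j, by omega⟩
              (Fin.castSucc (⟨(k : ℕ) + j + 1, by omega⟩ : Fin (m + 2))) (by simp),
            mul_inv_cancel]
        · have hcw : X.δ (Fin.castSucc i) w = 1 := hclean i hi (by omega)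
          have e : X.δ (Fin.castSucc i) (X.σ (⟨(k : ℕ) + j, by omega⟩ : Fin (m + 2))
              (X.δ (Fin.castSucc (⟨(k : ℕ) + j + 1, by omega⟩ : Fin (m + 2))) w)) = 1 := by
            rw [SGrp.L6 X (Fin.castSucc i) ⟨(k : ℕ) + j, by omega⟩ (by simp; omega)]
            have hL2 := SGrp.L2 X (⟨(k : ℕ) + j + 1, by omega⟩ : Fin (m + 2)) i
              (by simpa using h) w
            rw [hcw, map_one] at hL2
            have : X.δ (⟨((Fin.castSucc i : ℕ)) - 1,
                by have := (Fin.castSucc i).isLt; omega⟩ : Fin (m + 2))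
                (X.δ (Fin.castSucc (⟨(k : ℕ) + j + 1, by omega⟩ : Fin (m + 2))) w) = 1 := by
              simp only [Fin.coe_castSucc]
              exact hL2.symm
            rw [this, map_one]
          rw [map_mul, map_inv, hcw, e, inv_one, mul_one]
    · refine ⟨w, hw, fun i hi => hclean i hi fun h => hrA ?_⟩
      have : i = (⟨(k : ℕ) + j + 1, by omega⟩ : Fin (m + 2)) := Fin.ext (by simp; omega)
      rwa [this] at hi

end Helpers

/-- For a simplicial group `X`, `n = m+2 ≥ 2`, and a proper subset `A ⊊ {0,…,n-1}`:
`d^n_n(⋂_{i∈A} Ker d^n_i) = ⋂_{i∈A} Ker d^{n-1}_i` (for `A = ∅` this says that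
`d^n_n : X_n → X_{n-1}` is surjective). -/
theorem image_last_face_inf_kernels (X : SimplicialObject GrpCat) (m : ℕ)
    (A : Finset (Fin (m + 2))) (hA : A ≠ Finset.univ) :
    Subgroup.map (X.δ (Fin.last (m + 2))).hom
        (⨅ i ∈ A, MonoidHom.ker (X.δ (Fin.castSucc i)).hom) =
      ⨅ i ∈ A, MonoidHom.ker (X.δ i).hom := by
  apply le_antisymm
  · intro g hg
    obtain ⟨x, hx, rfl⟩ := Subgroup.mem_map.mp hg
    simp only [Subgroup.mem_iInf, MonoidHom.mem_ker] at hx ⊢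
    intro i hi
    rw [SGrp.L1 X i x, hx i hi, map_one]
  · intro y hy
    simp only [Subgroup.mem_iInf, MonoidHom.mem_ker] at hy
    obtain ⟨k, hk⟩ : ∃ k, k ∉ A := by
      by_contra h
      push_neg at h
      exact hA (Finset.eq_univ_iff_forall.2 h)
    obtain ⟨x, hx1, hx2⟩ := SGrp.fill X A k hk y hy (m + 1 - (k : ℕ))
      (by have := k.isLt; omega) (X.σ (Fin.last (m + 1)) y)
      (SGrp.L3 X (Fin.last (m + 1)) (Fin.last (m + 2)) (by simp) y)
      (by
        intro i hi hne
        have hlt : (i : ℕ) < m + 1 := by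
          have h1 := i.isLt
          have h2 := k.isLt
          omega
        rw [SGrp.L5 X i (Fin.last (m + 1)) (by simpa using hlt) y, hy i hi, map_one])
    exact Subgroup.mem_map.mpr ⟨x, by
      simp only [Subgroup.mem_iInf, MonoidHom.mem_ker]; exact hx2, hx1⟩
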